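/- Let G = (V,E) be a locally finite graph, q : V → [0,∞) and U ⊆ V. Then for every finitely supported f : V → ℂ whose support is contained in U, (1 − √(1 − α_U²))·(Q_deg(f) + Q_q(f)) ≤ Q_Δ(f) + Q_q(f) ≤ (1 + √(1 − α_U²))·(Q_deg(f) + Q_q(f)). -/

import Mathlib

open scoped BigOperators

noncomputable section

variable {V : Type*} [DecidableEq V] (G : SimpleGraph V) [DecidableRel G.Adj]

/-- The squared `ℓ²`-norm `‖f‖² = ∑_x |f x|²` of a (finitely supported) function. -/
def qNormSq (f : V → ℂ) : ℝ := ∑' x, ‖f x‖ ^ 2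

/-- The quadratic form of the Laplacian:
`Q_Δ(f) = (1/2) ∑_{x ~ y} |f x - f y|²` (sum over ordered pairs of adjacent vertices). -/
def qLap (f : V → ℂ) : ℝ :=
  (1 / 2) * ∑' (x : V), ∑' (y : V), if G.Adj x y then ‖f x - f y‖ ^ 2 else 0

/-- The magnetic quadratic form
`Q_θ(f) = (1/2) ∑_{x ~ y} |f x - e^{iθ(x,y)} f y|²`. -/
def qMag (θ : V → V → ℝ) (f : V → ℂ) : ℝ :=
  (1 / 2) * ∑' (x : V), ∑' (y : V),
    if G.Adj x y then ‖f x - Complex.exp (Complex.I * (θ x y)) * f y‖ ^ 2 else 0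

/-- The quadratic form of a potential: `Q_q(f) = ∑_x q x * |f x|²`. -/
def qPot (q : V → ℝ) (f : V → ℂ) : ℝ := ∑' x, q x * ‖f x‖ ^ 2

variable [G.LocallyFinite]

/-- The quadratic form of the degree: `Q_deg(f) = ∑_x deg x * |f x|²`. -/
def qDeg (f : V → ℂ) : ℝ := ∑' x, (G.degree x : ℝ) * ‖f x‖ ^ 2

/-- Twice the number of undirected edges of the subgraph induced on `W`,
i.e. the number of ordered pairs of adjacent vertices in `W × W`. -/
def edgesTwice (W : Finset V) : ℕ := ((W ×ˢ W).filter fun p => G.Adj p.1 p.2).card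

/-- The cardinality `|∂W|` of the edge boundary of `W`. -/
def bdryCard (W : Finset V) : ℕ :=
  ∑ x ∈ W, ((G.neighborFinset x).filter fun y => y ∉ W).card

/-- `(G, q)` is `(a,k)`-sparse: `2|E_W| ≤ k|W| + a(|∂W| + q₊(W))` for all finite `W`. -/
def IsSparse (q : V → ℝ) (a k : ℝ) : Prop :=
  ∀ W : Finset V,
    (edgesTwice G W : ℝ) ≤ k * W.card + a * ((bdryCard G W : ℝ) + ∑ x ∈ W, max (q x) 0)

/-- The potential `q` belongs to the class `K_α`:
`Q_{q₋}(f) ≤ α (Q_Δ(f) + Q_{q₊}(f)) + C ‖f‖²` for all finitely supported `f`. -/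
def KClass (q : V → ℝ) (α : ℝ) : Prop :=
  ∃ C : ℝ, 0 ≤ C ∧ ∀ f : V → ℂ, (Function.support f).Finite →
    qPot (fun x => max (-q x) 0) f ≤
      α * (qLap G f + qPot (fun x => max (q x) 0) f) + C * qNormSq f

/-- The potential `q` belongs to the magnetic class `K_α^θ`:
`Q_{q₋}(f) ≤ α (Q_θ(f) + Q_{q₊}(f)) + C ‖f‖²` for all finitely supported `f`. -/
def KClassTheta (θ : V → V → ℝ) (q : V → ℝ) (α : ℝ) : Prop :=
  ∃ C : ℝ, 0 ≤ C ∧ ∀ f : V → ℂ, (Function.support f).Finite →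
    qPot (fun x => max (-q x) 0) f ≤
      α * (qMag G θ f + qPot (fun x => max (q x) 0) f) + C * qNormSq f

/-- The Cheeger (isoperimetric) constant of `U ⊆ V`:
the infimum over nonempty finite `W ⊆ U` of `(|∂W| + q(W)) / (deg(W) + q(W))`,
with the convention that the quotient is `0` when the denominator vanishes. -/
def cheeger (q : V → ℝ) (U : Set V) : ℝ :=
  ⨅ W : {W : Finset V // ↑W ⊆ U ∧ W.Nonempty},
    if (∑ x ∈ W.1, ((G.degree x : ℝ) + q x)) = 0 then 0
    else ((bdryCard G W.1 : ℝ) + ∑ x ∈ W.1, q x) / ∑ x ∈ W.1, ((G.degree x : ℝ) + q x)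

/-- The Cheeger constant at infinity: `α_∞ = sup over finite K of α_{V∖K}`. -/
def cheegerInfty (q : V → ℝ) : ℝ :=
  ⨆ K : Finset V, cheeger G q ((↑K : Set V)ᶜ)


section Aux
open Finset
set_option linter.unusedSectionVars false


/-- counting lemma -/
lemma L1 (F S : Finset V) (hN : ∀ x ∈ F, G.neighborFinset x ⊆ S) (c : V → ℝ)
    (hc : ∀ x, c x ≠ 0 → x ∈ F) :
    ∑ x ∈ S, ∑ y ∈ S, (if G.Adj x y then c x else 0) = ∑ x ∈ S, (G.degree x : ℝ) * c x := by
  refine Finset.sum_congr rfl fun x hx => ?_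
  rcases eq_or_ne (c x) 0 with h | h
  · simp [h]
  · have hsub : G.neighborFinset x ⊆ S := hN x (hc x h)
    have hfil : S.filter (fun y => G.Adj x y) = G.neighborFinset x := by
      ext y
      simp only [mem_filter, SimpleGraph.mem_neighborFinset]
      exact ⟨fun h => h.2, fun h => ⟨hsub (by simpa using h), h⟩⟩
    rw [Finset.sum_ite, Finset.sum_const, Finset.sum_const_zero, hfil,
      G.card_neighborFinset_eq_degree, add_zero, nsmul_eq_mul]

lemma L1sym (F S : Finset V) (hN : ∀ x ∈ F, G.neighborFinset x ⊆ S) (c : V → ℝ)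
    (hc : ∀ x, c x ≠ 0 → x ∈ F) :
    ∑ x ∈ S, ∑ y ∈ S, (if G.Adj x y then c y else 0) = ∑ x ∈ S, (G.degree x : ℝ) * c x := by
  rw [Finset.sum_comm]
  rw [← L1 G F S hN c hc]
  simp_rw [SimpleGraph.adj_comm]

/-- real expansion -/
lemma L3 (F S : Finset V) (hN : ∀ x ∈ F, G.neighborFinset x ⊆ S) (h : V → ℝ)
    (hsupp : ∀ x, h x ≠ 0 → x ∈ F) (ε : ℝ) (hε : ε ^ 2 = 1) :
    ∑ x ∈ S, ∑ y ∈ S, (if G.Adj x y then (h x + ε * h y) ^ 2 else 0)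
      = 2 * ∑ x ∈ S, (G.degree x : ℝ) * (h x) ^ 2
        + 2 * ε * ∑ x ∈ S, ∑ y ∈ S, (if G.Adj x y then h x * h y else 0) := by
  have key : ∀ x y : V, (if G.Adj x y then (h x + ε * h y) ^ 2 else 0)
      = (if G.Adj x y then (h x) ^ 2 else 0) + (if G.Adj x y then (h y) ^ 2 else 0)
        + 2 * ε * (if G.Adj x y then h x * h y else 0) := by
    intro x y; by_cases hxy : G.Adj x y
    · simp only [if_pos hxy]; linear_combination (h y) ^ 2 * hε
    · simp [hxy]
  have hc : ∀ x, (h x) ^ 2 ≠ 0 → x ∈ F := fun x hx => hsupp x (fun h0 => hx (by simp [h0]))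
  calc ∑ x ∈ S, ∑ y ∈ S, (if G.Adj x y then (h x + ε * h y) ^ 2 else 0)
      = ∑ x ∈ S, ∑ y ∈ S, ((if G.Adj x y then (h x) ^ 2 else 0)
          + (if G.Adj x y then (h y) ^ 2 else 0)
          + 2 * ε * (if G.Adj x y then h x * h y else 0)) := by simp_rw [key]
    _ = (∑ x ∈ S, ∑ y ∈ S, (if G.Adj x y then (h x) ^ 2 else 0))
          + (∑ x ∈ S, ∑ y ∈ S, (if G.Adj x y then (h y) ^ 2 else 0))
          + 2 * ε * ∑ x ∈ S, ∑ y ∈ S, (if G.Adj x y then h x * h y else 0) := by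
        simp_rw [Finset.sum_add_distrib, ← Finset.mul_sum]
    _ = _ := by
        rw [L1 G F S hN _ hc, L1sym G F S hN _ hc]; ring

/-- complex expansion -/
lemma L2 (F S : Finset V) (hN : ∀ x ∈ F, G.neighborFinset x ⊆ S) (f : V → ℂ)
    (hsupp : ∀ x, f x ≠ 0 → x ∈ F) :
    ∑ x ∈ S, ∑ y ∈ S, (if G.Adj x y then ‖f x - f y‖ ^ 2 else 0)
      = 2 * ∑ x ∈ S, (G.degree x : ℝ) * ‖f x‖ ^ 2
        - 2 * ∑ x ∈ S, ∑ y ∈ S, (if G.Adj x y then (f x * (starRingEnd ℂ) (f y)).re else 0) := by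
  have keypt : ∀ a b : ℂ, ‖a - b‖ ^ 2 = ‖a‖ ^ 2 + ‖b‖ ^ 2 - 2 * (a * (starRingEnd ℂ) b).re := by
    intro a b
    rw [Complex.sq_norm, Complex.sq_norm, Complex.sq_norm]
    simp only [Complex.normSq_apply, Complex.sub_re, Complex.sub_im, Complex.mul_re,
      Complex.conj_re, Complex.conj_im]
    ring
  have key : ∀ x y : V, (if G.Adj x y then ‖f x - f y‖ ^ 2 else 0)
      = (if G.Adj x y then ‖f x‖ ^ 2 else 0) + (if G.Adj x y then ‖f y‖ ^ 2 else 0)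
        - 2 * (if G.Adj x y then (f x * (starRingEnd ℂ) (f y)).re else 0) := by
    intro x y; by_cases hxy : G.Adj x y
    · simp only [if_pos hxy]; rw [keypt]
    · simp [hxy]
  have hc : ∀ x, ‖f x‖ ^ 2 ≠ 0 → x ∈ F := fun x hx => hsupp x (fun h0 => hx (by simp [h0]))
  calc ∑ x ∈ S, ∑ y ∈ S, (if G.Adj x y then ‖f x - f y‖ ^ 2 else 0)
      = (∑ x ∈ S, ∑ y ∈ S, (if G.Adj x y then ‖f x‖ ^ 2 else 0))
          + (∑ x ∈ S, ∑ y ∈ S, (if G.Adj x y then ‖f y‖ ^ 2 else 0))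
          - 2 * ∑ x ∈ S, ∑ y ∈ S, (if G.Adj x y then (f x * (starRingEnd ℂ) (f y)).re else 0) := by
        simp_rw [key, Finset.sum_sub_distrib, Finset.sum_add_distrib, ← Finset.mul_sum]
    _ = _ := by
        rw [L1 G F S hN _ hc, L1sym G F S hN _ hc]; ring

/-- boundary counting for indicators -/
lemma L7 (W S : Finset V) (hWS : W ⊆ S) (hNW : ∀ x ∈ W, G.neighborFinset x ⊆ S) :
    ∑ x ∈ S, ∑ y ∈ S, (if G.Adj x y then
        |(if x ∈ W then (1:ℝ) else 0) - (if y ∈ W then (1:ℝ) else 0)| else 0)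
      = 2 * (bdryCard G W : ℝ) := by
  have key : ∀ x y : V, (if G.Adj x y then
        |(if x ∈ W then (1:ℝ) else 0) - (if y ∈ W then (1:ℝ) else 0)| else 0)
      = (if G.Adj x y ∧ x ∈ W ∧ y ∉ W then (1:ℝ) else 0)
        + (if G.Adj x y ∧ y ∈ W ∧ x ∉ W then (1:ℝ) else 0) := by
    intro x y
    by_cases hxy : G.Adj x y <;> by_cases hx : x ∈ W <;> by_cases hy : y ∈ W <;>
      simp [hxy, hx, hy]
  have first : ∑ x ∈ S, ∑ y ∈ S, (if G.Adj x y ∧ x ∈ W ∧ y ∉ W then (1:ℝ) else 0)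
      = (bdryCard G W : ℝ) := by
    have inner : ∀ x ∈ S, (∑ y ∈ S, (if G.Adj x y ∧ x ∈ W ∧ y ∉ W then (1:ℝ) else 0))
        = (if x ∈ W then (((G.neighborFinset x).filter fun y => y ∉ W).card : ℝ) else 0) := by
      intro x hx
      by_cases hxW : x ∈ W
      · rw [if_pos hxW, Finset.sum_boole]
        congr 1
        congr 1
        ext y
        simp only [mem_filter, SimpleGraph.mem_neighborFinset]
        constructor
        · rintro ⟨hyS, hadj, -, hyW⟩; exact ⟨hadj, hyW⟩
        · rintro ⟨hadj, hyW⟩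
          exact ⟨hNW x hxW (by simpa [SimpleGraph.mem_neighborFinset] using hadj), hadj, hxW, hyW⟩
      · rw [if_neg hxW]
        refine Finset.sum_eq_zero fun y hy => ?_
        rw [if_neg]; tauto
    rw [Finset.sum_congr rfl inner, Finset.sum_ite_mem,
      Finset.inter_eq_right.mpr hWS, bdryCard]
    push_cast
    rfl
  have second : ∑ x ∈ S, ∑ y ∈ S, (if G.Adj x y ∧ y ∈ W ∧ x ∉ W then (1:ℝ) else 0)
      = (bdryCard G W : ℝ) := by
    rw [← first, Finset.sum_comm]
    refine Finset.sum_congr rfl fun x _ => Finset.sum_congr rfl fun y _ => ?_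
    congr 1
    rw [G.adj_comm]
  simp_rw [key, Finset.sum_add_distrib]
  rw [first, second]; ring


/-- nonnegativity of each Cheeger quotient -/
lemma cheegerTermNonneg (q : V → ℝ) (hq : ∀ x, 0 ≤ q x) (U : Set V)
    (W : {W : Finset V // ↑W ⊆ U ∧ W.Nonempty}) :
    0 ≤ (if (∑ x ∈ W.1, ((G.degree x : ℝ) + q x)) = 0 then 0
      else ((bdryCard G W.1 : ℝ) + ∑ x ∈ W.1, q x) / ∑ x ∈ W.1, ((G.degree x : ℝ) + q x)) := by
  split_ifs with h
  · exact le_refl 0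
  · apply div_nonneg
    · have h1 : (0:ℝ) ≤ ∑ x ∈ W.1, q x := Finset.sum_nonneg fun x _ => hq x
      have h2 : (0:ℝ) ≤ (bdryCard G W.1 : ℝ) := Nat.cast_nonneg _
      linarith
    · exact Finset.sum_nonneg fun x _ => add_nonneg (Nat.cast_nonneg _) (hq x)

lemma cheeger_nonneg (q : V → ℝ) (hq : ∀ x, 0 ≤ q x) (U : Set V) : 0 ≤ cheeger G q U :=
  Real.iInf_nonneg (cheegerTermNonneg G q hq U)

/-- The basic Cheeger estimate for a single finite set. -/
lemma L5 (q : V → ℝ) (hq : ∀ x, 0 ≤ q x) (U : Set V) (W : Finset V)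
    (hWU : ↑W ⊆ U) (hWne : W.Nonempty) :
    cheeger G q U * (∑ x ∈ W, ((G.degree x : ℝ) + q x))
      ≤ (bdryCard G W : ℝ) + ∑ x ∈ W, q x := by
  have hbdd : BddBelow (Set.range fun (W : {W : Finset V // ↑W ⊆ U ∧ W.Nonempty}) =>
      if (∑ x ∈ W.1, ((G.degree x : ℝ) + q x)) = 0 then 0
      else ((bdryCard G W.1 : ℝ) + ∑ x ∈ W.1, q x) / ∑ x ∈ W.1, ((G.degree x : ℝ) + q x)) := by
    refine ⟨0, ?_⟩
    rintro v ⟨W, rfl⟩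
    exact cheegerTermNonneg G q hq U W
  have hle : cheeger G q U ≤ (if (∑ x ∈ W, ((G.degree x : ℝ) + q x)) = 0 then 0
      else ((bdryCard G W : ℝ) + ∑ x ∈ W, q x) / ∑ x ∈ W, ((G.degree x : ℝ) + q x)) :=
    ciInf_le hbdd (⟨W, hWU, hWne⟩ : {W : Finset V // ↑W ⊆ U ∧ W.Nonempty})
  have hRHS : (0:ℝ) ≤ (bdryCard G W : ℝ) + ∑ x ∈ W, q x := by
    have h1 : (0:ℝ) ≤ ∑ x ∈ W, q x := Finset.sum_nonneg fun x _ => hq x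
    have h2 : (0:ℝ) ≤ (bdryCard G W : ℝ) := Nat.cast_nonneg _
    linarith
  by_cases hd : (∑ x ∈ W, ((G.degree x : ℝ) + q x)) = 0
  · rw [hd, mul_zero]; exact hRHS
  · have hdnn : (0:ℝ) ≤ ∑ x ∈ W, ((G.degree x : ℝ) + q x) :=
      Finset.sum_nonneg fun x _ => add_nonneg (Nat.cast_nonneg _) (hq x)
    have hdpos : (0:ℝ) < ∑ x ∈ W, ((G.degree x : ℝ) + q x) := lt_of_le_of_ne hdnn (Ne.symm hd)
    rw [if_neg hd] at hle
    calc cheeger G q U * (∑ x ∈ W, ((G.degree x : ℝ) + q x))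
        ≤ (((bdryCard G W : ℝ) + ∑ x ∈ W, q x) / ∑ x ∈ W, ((G.degree x : ℝ) + q x))
            * (∑ x ∈ W, ((G.degree x : ℝ) + q x)) := mul_le_mul_of_nonneg_right hle hdnn
      _ = (bdryCard G W : ℝ) + ∑ x ∈ W, q x := div_mul_cancel₀ _ hd

/-- co-area / level set induction -/
lemma L6 (q : V → ℝ) (hq : ∀ x, 0 ≤ q x) (U : Set V) (F S : Finset V)
    (hFU : ↑F ⊆ U) (hFS : F ⊆ S) (hN : ∀ x ∈ F, G.neighborFinset x ⊆ S) :
    ∀ n : ℕ, ∀ g : V → ℝ, (∀ x, 0 ≤ g x) → (∀ x, g x ≠ 0 → x ∈ F) →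
      ((F.filter fun x => g x ≠ 0).card ≤ n) →
      cheeger G q U * (∑ x ∈ S, ((G.degree x : ℝ) + q x) * g x)
        ≤ (1/2) * (∑ x ∈ S, ∑ y ∈ S, if G.Adj x y then |g x - g y| else 0)
          + ∑ x ∈ S, q x * g x := by
  intro n
  induction n with
  | zero =>
    intro g hg0 hgF hcard
    have hz : ∀ x, g x = 0 := by
      intro x
      by_contra hx
      have : x ∈ F.filter fun x => g x ≠ 0 := Finset.mem_filter.mpr ⟨hgF x hx, hx⟩
      have := Finset.card_pos.mpr ⟨x, this⟩
      omega
    simp [hz]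
  | succ n ih =>
    intro g hg0 hgF hcard
    by_cases hW : (F.filter fun x => g x ≠ 0).Nonempty
    case neg =>
      have hz : ∀ x, g x = 0 := by
        intro x; by_contra hx
        exact hW ⟨x, Finset.mem_filter.mpr ⟨hgF x hx, hx⟩⟩
      simp [hz]
    case pos =>
    set W := F.filter fun x => g x ≠ 0 with hWdef
    have hWF : W ⊆ F := Finset.filter_subset _ _
    have hWS : W ⊆ S := hWF.trans hFS
    have hgW : ∀ x, x ∉ W → g x = 0 := by
      intro x hx
      by_contra hgx
      exact hx (Finset.mem_filter.mpr ⟨hgF x hgx, hgx⟩)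
    obtain ⟨x0, hx0W, hx0⟩ := Finset.exists_mem_eq_inf' hW g
    set t := g x0 with htdef
    have htle : ∀ x ∈ W, t ≤ g x := by
      intro x hx
      rw [← hx0]
      exact Finset.inf'_le g hx
    have ht0 : 0 < t := by
      rw [htdef]
      exact lt_of_le_of_ne (hg0 x0) (Ne.symm (Finset.mem_filter.mp hx0W).2)
    set χ : V → ℝ := fun x => if x ∈ W then (1:ℝ) else 0 with hχ
    set g' : V → ℝ := fun x => g x - t * χ x with hg'
    have hχ1 : ∀ x, x ∈ W → χ x = 1 := fun x hx => by simp [hχ, hx]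
    have hχ0 : ∀ x, x ∉ W → χ x = 0 := fun x hx => by simp [hχ, hx]
    have hdecomp : ∀ x, g x = t * χ x + g' x := fun x => by simp [hg']
    have hg'in : ∀ x, x ∈ W → g' x = g x - t := by
      intro x hx; simp [hg', hχ1 x hx]
    have hg'out : ∀ x, x ∉ W → g' x = 0 := by
      intro x hx; simp [hg', hχ0 x hx, hgW x hx]
    have hg'0 : ∀ x, 0 ≤ g' x := by
      intro x
      by_cases hx : x ∈ W
      · rw [hg'in x hx]; linarith [htle x hx]
      · rw [hg'out x hx]
    have hg'W : ∀ x, g' x ≠ 0 → x ∈ W := by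
      intro x hx
      by_contra hxW
      exact hx (hg'out x hxW)
    have hg'F : ∀ x, g' x ≠ 0 → x ∈ F := fun x hx => hWF (hg'W x hx)
    have hcard' : (F.filter fun x => g' x ≠ 0).card ≤ n := by
      have hsub : (F.filter fun x => g' x ≠ 0) ⊆ W.erase x0 := by
        intro x hx
        have hxW : x ∈ W := hg'W x (Finset.mem_filter.mp hx).2
        refine Finset.mem_erase.mpr ⟨?_, hxW⟩
        rintro rfl
        have hz : g' x = 0 := by rw [hg'in x hxW, htdef, sub_self]
        exact (Finset.mem_filter.mp hx).2 hz
      have h1 := Finset.card_le_card hsub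
      have h2 : (W.erase x0).card < W.card := Finset.card_erase_lt_of_mem hx0W
      have h3 : W.card ≤ n + 1 := hcard
      omega
    have hpt : ∀ x y : V, |g x - g y| = t * |χ x - χ y| + |g' x - g' y| := by
      intro x y
      by_cases hx : x ∈ W <;> by_cases hy : y ∈ W
      · have e1 : χ x - χ y = 0 := by rw [hχ1 x hx, hχ1 y hy, sub_self]
        have e2 : g' x - g' y = g x - g y := by rw [hg'in x hx, hg'in y hy]; ring
        rw [e1, e2, abs_zero, mul_zero, zero_add]
      · have e0 : |g x - g y| = g x := by rw [hgW y hy, sub_zero, abs_of_nonneg (hg0 x)]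
        have e1 : |χ x - χ y| = 1 := by rw [hχ1 x hx, hχ0 y hy, sub_zero, abs_one]
        have e2 : |g' x - g' y| = g x - t := by
          rw [hg'in x hx, hg'out y hy, sub_zero, abs_of_nonneg (by linarith [htle x hx])]
        rw [e0, e1, e2]; ring
      · have e0 : |g x - g y| = g y := by
          rw [hgW x hx, zero_sub, abs_neg, abs_of_nonneg (hg0 y)]
        have e1 : |χ x - χ y| = 1 := by rw [hχ0 x hx, hχ1 y hy, zero_sub, abs_neg, abs_one]
        have e2 : |g' x - g' y| = g y - t := by
          rw [hg'in y hy, hg'out x hx, zero_sub, abs_neg,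
            abs_of_nonneg (by linarith [htle y hy])]
        rw [e0, e1, e2]; ring
      · have e0 : g x - g y = 0 := by rw [hgW x hx, hgW y hy, sub_self]
        have e1 : χ x - χ y = 0 := by rw [hχ0 x hx, hχ0 y hy, sub_self]
        have e2 : g' x - g' y = 0 := by rw [hg'out x hx, hg'out y hy, sub_self]
        rw [e0, e1, e2]
        simp
    have hsplit : ∀ c : V → ℝ, ∑ x ∈ S, c x * g x = t * (∑ x ∈ W, c x) + ∑ x ∈ S, c x * g' x := by
      intro c
      have h1 : ∀ x ∈ S, c x * g x = t * (c x * χ x) + c x * g' x := by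
        intro x _; rw [hdecomp x]; ring
      rw [Finset.sum_congr rfl h1, Finset.sum_add_distrib, ← Finset.mul_sum]
      congr 2
      have h2 : ∀ x ∈ S, c x * χ x = if x ∈ W then c x else 0 := by
        intro x _
        by_cases hx : x ∈ W
        · rw [hχ1 x hx, mul_one, if_pos hx]
        · rw [hχ0 x hx, mul_zero, if_neg hx]
      rw [Finset.sum_congr rfl h2, Finset.sum_ite_mem, Finset.inter_eq_right.mpr hWS]
    have hA1 := hsplit (fun x => (G.degree x : ℝ) + q x)
    have hA2 := hsplit q
    have hA3 : (∑ x ∈ S, ∑ y ∈ S, if G.Adj x y then |g x - g y| else 0)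
        = t * (2 * (bdryCard G W : ℝ))
          + ∑ x ∈ S, ∑ y ∈ S, (if G.Adj x y then |g' x - g' y| else 0) := by
      have key : ∀ x y : V, (if G.Adj x y then |g x - g y| else 0)
          = t * (if G.Adj x y then |χ x - χ y| else 0)
            + (if G.Adj x y then |g' x - g' y| else 0) := by
        intro x y; by_cases hxy : G.Adj x y
        · simp only [if_pos hxy]; exact hpt x y
        · simp [hxy]
      simp_rw [key, Finset.sum_add_distrib, ← Finset.mul_sum]
      rw [L7 G W S hWS (fun x hx => hN x (hWF hx))]
    have hWU : ↑W ⊆ U := fun x hx => hFU (hWF hx)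
    have hL5 := L5 G q hq U W hWU hW
    have hIH := ih g' hg'0 hg'F hcard'
    have hmul : cheeger G q U * (t * ∑ x ∈ W, ((G.degree x : ℝ) + q x))
        ≤ t * ((bdryCard G W : ℝ) + ∑ x ∈ W, q x) := by
      have h := mul_le_mul_of_nonneg_left hL5 (le_of_lt ht0)
      nlinarith [h]
    rw [hA1, hA2, hA3]
    nlinarith [hmul, hIH]

end Aux

set_option maxHeartbeats 1600000

/-- for `q ≥ 0`, `U ⊆ V` and every finitely supported `f` with support in
`U`, `(1 - √(1-α_U²))(Q_deg(f)+Q_q(f)) ≤ Q_Δ(f)+Q_q(f) ≤ (1 + √(1-α_U²))(Q_deg(f)+Q_q(f))`. -/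
theorem stmt14 [Countable V] (q : V → ℝ) (hq : ∀ x, 0 ≤ q x) (U : Set V)
    (f : V → ℂ) (hf : (Function.support f).Finite) (hfU : Function.support f ⊆ U) :
    (1 - Real.sqrt (1 - (cheeger G q U) ^ 2)) * (qDeg G f + qPot q f)
        ≤ qLap G f + qPot q f ∧
      qLap G f + qPot q f
        ≤ (1 + Real.sqrt (1 - (cheeger G q U) ^ 2)) * (qDeg G f + qPot q f) := by
  classical
  set F : Finset V := hf.toFinset with hF
  set S : Finset V := F ∪ F.biUnion (fun x => G.neighborFinset x) with hS
  have hFS : F ⊆ S := Finset.subset_union_left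
  have hsupp : ∀ x, f x ≠ 0 → x ∈ F := by
    intro x hx
    rw [hF, Set.Finite.mem_toFinset]
    exact hx
  have hN : ∀ x ∈ F, G.neighborFinset x ⊆ S := by
    intro x hx y hy
    exact Finset.subset_union_right (Finset.mem_biUnion.mpr ⟨x, hx, hy⟩)
  have hFU : ↑F ⊆ U := by
    intro x hx
    apply hfU
    rw [hF, Set.Finite.coe_toFinset] at hx
    exact hx
  have hzero : ∀ x, x ∉ S → f x = 0 := by
    intro x hx
    by_contra h
    exact hx (hFS (hsupp x h))
  have hadjzero : ∀ x y : V, G.Adj x y → x ∉ S → f x = 0 ∧ f y = 0 := by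
    intro x y hadj hx
    refine ⟨hzero x hx, ?_⟩
    by_contra hy
    exact hx (hN y (hsupp y hy) ((G.mem_neighborFinset y x).mpr hadj.symm))
  -- tsum reductions
  have hqdeg : qDeg G f = ∑ x ∈ S, (G.degree x : ℝ) * ‖f x‖ ^ 2 := by
    rw [qDeg]
    exact tsum_eq_sum (fun x hx => by rw [hzero x hx]; simp)
  have hqpot : qPot q f = ∑ x ∈ S, q x * ‖f x‖ ^ 2 := by
    rw [qPot]
    exact tsum_eq_sum (fun x hx => by rw [hzero x hx]; simp)
  have hqlap : qLap G f
      = (1/2) * ∑ x ∈ S, ∑ y ∈ S, (if G.Adj x y then ‖f x - f y‖ ^ 2 else 0) := by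
    have outer : ∀ x, x ∉ S → ∑' (y : V), (if G.Adj x y then ‖f x - f y‖ ^ 2 else 0) = 0 := by
      intro x hx
      have h0 : ∀ y, (if G.Adj x y then ‖f x - f y‖ ^ 2 else 0) = 0 := by
        intro y
        by_cases hadj : G.Adj x y
        · obtain ⟨h1, h2⟩ := hadjzero x y hadj hx
          rw [if_pos hadj, h1, h2]; simp
        · rw [if_neg hadj]
      simp only [h0, tsum_zero]
    have inner : ∀ x, ∀ y, y ∉ S → (if G.Adj x y then ‖f x - f y‖ ^ 2 else 0) = 0 := by
      intro x y hy
      by_cases hadj : G.Adj x y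
      · obtain ⟨h1, h2⟩ := hadjzero y x hadj.symm hy
        rw [if_pos hadj, h1, h2]; simp
      · rw [if_neg hadj]
    rw [qLap, tsum_eq_sum (fun x hx => outer x hx)]
    congr 1
    exact Finset.sum_congr rfl fun x _ => tsum_eq_sum (fun y hy => inner x y hy)
  -- expansions
  have hs2 : ∀ x : V, ‖f x‖ ≠ 0 → x ∈ F := by
    intro x hx
    refine hsupp x fun h0 => hx ?_
    rw [h0, norm_zero]
  have hLap2 := L2 G F S hN f hsupp
  have hE2eq : (∑ x ∈ S, ∑ y ∈ S, (if G.Adj x y then (‖f x‖ + (-1) * ‖f y‖) ^ 2 else 0))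
      = 2 * ∑ x ∈ S, (G.degree x : ℝ) * ‖f x‖ ^ 2
        + 2 * (-1) * ∑ x ∈ S, ∑ y ∈ S, (if G.Adj x y then ‖f x‖ * ‖f y‖ else 0) :=
    L3 G F S hN (fun x => ‖f x‖) hs2 (-1) (by norm_num)
  have hE3eq : (∑ x ∈ S, ∑ y ∈ S, (if G.Adj x y then (‖f x‖ + 1 * ‖f y‖) ^ 2 else 0))
      = 2 * ∑ x ∈ S, (G.degree x : ℝ) * ‖f x‖ ^ 2
        + 2 * 1 * ∑ x ∈ S, ∑ y ∈ S, (if G.Adj x y then ‖f x‖ * ‖f y‖ else 0) :=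
    L3 G F S hN (fun x => ‖f x‖) hs2 1 (by norm_num)
  -- bounds on the cross term
  have hAle : (∑ x ∈ S, ∑ y ∈ S, (if G.Adj x y then (f x * (starRingEnd ℂ) (f y)).re else 0))
      ≤ ∑ x ∈ S, ∑ y ∈ S, (if G.Adj x y then ‖f x‖ * ‖f y‖ else 0) := by
    refine Finset.sum_le_sum fun x _ => Finset.sum_le_sum fun y _ => ?_
    by_cases hadj : G.Adj x y
    · rw [if_pos hadj, if_pos hadj]
      calc (f x * (starRingEnd ℂ) (f y)).re ≤ ‖f x * (starRingEnd ℂ) (f y)‖ :=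
            Complex.re_le_norm _
        _ = ‖f x‖ * ‖f y‖ := by rw [norm_mul, RCLike.norm_conj]
    · rw [if_neg hadj, if_neg hadj]
  have hAge : -(∑ x ∈ S, ∑ y ∈ S, (if G.Adj x y then ‖f x‖ * ‖f y‖ else 0))
      ≤ ∑ x ∈ S, ∑ y ∈ S, (if G.Adj x y then (f x * (starRingEnd ℂ) (f y)).re else 0) := by
    rw [← Finset.sum_neg_distrib]
    refine Finset.sum_le_sum fun x _ => ?_
    rw [← Finset.sum_neg_distrib]
    refine Finset.sum_le_sum fun y _ => ?_
    by_cases hadj : G.Adj x y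
    · rw [if_pos hadj, if_pos hadj]
      have h1 : |(f x * (starRingEnd ℂ) (f y)).re| ≤ ‖f x * (starRingEnd ℂ) (f y)‖ :=
        Complex.abs_re_le_norm _
      have h2 : ‖f x * (starRingEnd ℂ) (f y)‖ = ‖f x‖ * ‖f y‖ := by
        rw [norm_mul, RCLike.norm_conj]
      have := (abs_le.mp h1).1
      linarith
    · simp [hadj]
  have hSpnn : 0 ≤ ∑ x ∈ S, ∑ y ∈ S, (if G.Adj x y then ‖f x‖ * ‖f y‖ else 0) := by
    refine Finset.sum_nonneg fun x _ => Finset.sum_nonneg fun y _ => ?_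
    split_ifs
    · positivity
    · exact le_refl 0
  have hDgnn : 0 ≤ ∑ x ∈ S, (G.degree x : ℝ) * ‖f x‖ ^ 2 :=
    Finset.sum_nonneg fun x _ => by positivity
  have hPnn : 0 ≤ ∑ x ∈ S, q x * ‖f x‖ ^ 2 :=
    Finset.sum_nonneg fun x _ => mul_nonneg (hq x) (by positivity)
  have hE1nn : 0 ≤ ∑ x ∈ S, ∑ y ∈ S, (if G.Adj x y then |‖f x‖ ^ 2 - ‖f y‖ ^ 2| else 0) := by
    refine Finset.sum_nonneg fun x _ => Finset.sum_nonneg fun y _ => ?_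
    split_ifs
    · exact abs_nonneg _
    · exact le_refl 0
  -- Cauchy-Schwarz
  have hCS0 := Finset.sum_mul_sq_le_sq_mul_sq (S ×ˢ S)
    (fun p => if G.Adj p.1 p.2 then |‖f p.1‖ - ‖f p.2‖| else 0)
    (fun p => if G.Adj p.1 p.2 then ‖f p.1‖ + ‖f p.2‖ else 0)
  have e1 : (∑ p ∈ S ×ˢ S, (if G.Adj p.1 p.2 then |‖f p.1‖ - ‖f p.2‖| else 0)
        * (if G.Adj p.1 p.2 then ‖f p.1‖ + ‖f p.2‖ else 0))
      = ∑ x ∈ S, ∑ y ∈ S, (if G.Adj x y then |‖f x‖ ^ 2 - ‖f y‖ ^ 2| else 0) := by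
    rw [Finset.sum_product]
    refine Finset.sum_congr rfl fun x _ => Finset.sum_congr rfl fun y _ => ?_
    by_cases hadj : G.Adj x y
    · simp only [if_pos hadj]
      rw [← abs_of_nonneg (by positivity : (0:ℝ) ≤ ‖f x‖ + ‖f y‖), ← abs_mul]
      congr 1
      ring
    · simp [hadj]
  have e2 : (∑ p ∈ S ×ˢ S, (if G.Adj p.1 p.2 then |‖f p.1‖ - ‖f p.2‖| else 0) ^ 2)
      = ∑ x ∈ S, ∑ y ∈ S, (if G.Adj x y then (‖f x‖ + (-1) * ‖f y‖) ^ 2 else 0) := by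
    rw [Finset.sum_product]
    refine Finset.sum_congr rfl fun x _ => Finset.sum_congr rfl fun y _ => ?_
    by_cases hadj : G.Adj x y
    · simp only [if_pos hadj]
      rw [sq_abs]
      ring
    · simp [hadj]
  have e3 : (∑ p ∈ S ×ˢ S, (if G.Adj p.1 p.2 then ‖f p.1‖ + ‖f p.2‖ else 0) ^ 2)
      = ∑ x ∈ S, ∑ y ∈ S, (if G.Adj x y then (‖f x‖ + 1 * ‖f y‖) ^ 2 else 0) := by
    rw [Finset.sum_product]
    refine Finset.sum_congr rfl fun x _ => Finset.sum_congr rfl fun y _ => ?_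
    by_cases hadj : G.Adj x y
    · simp only [if_pos hadj]
      ring
    · simp [hadj]
  rw [e1, e2, e3] at hCS0
  -- AM-GM
  have hAM : 2 * (∑ x ∈ S, ∑ y ∈ S, (if G.Adj x y then |‖f x‖ ^ 2 - ‖f y‖ ^ 2| else 0))
      ≤ (∑ x ∈ S, ∑ y ∈ S, (if G.Adj x y then (‖f x‖ + (-1) * ‖f y‖) ^ 2 else 0))
        + ∑ x ∈ S, ∑ y ∈ S, (if G.Adj x y then (‖f x‖ + 1 * ‖f y‖) ^ 2 else 0) := by
    rw [Finset.mul_sum, ← Finset.sum_add_distrib]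
    refine Finset.sum_le_sum fun x _ => ?_
    rw [Finset.mul_sum, ← Finset.sum_add_distrib]
    refine Finset.sum_le_sum fun y _ => ?_
    by_cases hadj : G.Adj x y
    · simp only [if_pos hadj]
      rcases abs_cases (‖f x‖ ^ 2 - ‖f y‖ ^ 2) with ⟨h1, h2⟩ | ⟨h1, h2⟩ <;>
        nlinarith [sq_nonneg ‖f x‖, sq_nonneg ‖f y‖, norm_nonneg (f x), norm_nonneg (f y)]
    · simp [hadj]
  -- co-area / Cheeger bound
  have hCo : cheeger G q U * (∑ x ∈ S, ((G.degree x : ℝ) + q x) * ‖f x‖ ^ 2)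
      ≤ (1/2) * (∑ x ∈ S, ∑ y ∈ S, if G.Adj x y then |‖f x‖ ^ 2 - ‖f y‖ ^ 2| else 0)
        + ∑ x ∈ S, q x * ‖f x‖ ^ 2 :=
    L6 G q hq U F S hFU hFS hN F.card (fun x => ‖f x‖ ^ 2)
      (fun x => by positivity)
      (fun x hx => hs2 x (fun h0 => hx (by simp [h0])))
      (Finset.card_filter_le _ _)
  have hsum : (∑ x ∈ S, ((G.degree x : ℝ) + q x) * ‖f x‖ ^ 2)
      = (∑ x ∈ S, (G.degree x : ℝ) * ‖f x‖ ^ 2) + ∑ x ∈ S, q x * ‖f x‖ ^ 2 := by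
    rw [← Finset.sum_add_distrib]
    exact Finset.sum_congr rfl fun x _ => by ring
  rw [hsum] at hCo
  have hαnn : 0 ≤ cheeger G q U := cheeger_nonneg G q hq U
  -- abbreviations for the purely algebraic endgame
  set Dg := ∑ x ∈ S, (G.degree x : ℝ) * ‖f x‖ ^ 2 with hDg
  set P := ∑ x ∈ S, q x * ‖f x‖ ^ 2 with hP
  set A := ∑ x ∈ S, ∑ y ∈ S, (if G.Adj x y then (f x * (starRingEnd ℂ) (f y)).re else 0) with hA
  set Sp := ∑ x ∈ S, ∑ y ∈ S, (if G.Adj x y then ‖f x‖ * ‖f y‖ else 0) with hSp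
  set E1 := ∑ x ∈ S, ∑ y ∈ S, (if G.Adj x y then |‖f x‖ ^ 2 - ‖f y‖ ^ 2| else 0) with hE1
  set α := cheeger G q U with hal
  clear_value Dg P A Sp E1 α
  rw [hE2eq, hE3eq] at hCS0 hAM
  have hQD : qDeg G f + qPot q f = Dg + P := by rw [hqdeg, hqpot]
  have hQL : qLap G f + qPot q f = (Dg + P) - A := by
    rw [hqlap, hqpot, hLap2]; ring
  have hTnn : 0 ≤ (1/2) * E1 + P := by positivity
  have hDnn : 0 ≤ Dg + P := by positivity
  have hsq : (α * (Dg + P)) ^ 2 ≤ ((1/2) * E1 + P) ^ 2 :=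
    pow_le_pow_left₀ (mul_nonneg hαnn hDnn) hCo 2
  have hEP : 2 * E1 * P ≤ ((2 * Dg + 2 * (-1) * Sp) + (2 * Dg + 2 * 1 * Sp)) * P := by
    have := mul_le_mul_of_nonneg_right hAM hPnn
    linarith
  have hKey : Sp ^ 2 ≤ (1 - α ^ 2) * (Dg + P) ^ 2 := by linarith [hsq, hCS0, hEP]
  have hSpD : Sp ≤ Real.sqrt (1 - α ^ 2) * (Dg + P) := by
    calc Sp = Real.sqrt (Sp ^ 2) := (Real.sqrt_sq hSpnn).symm
      _ ≤ Real.sqrt ((1 - α ^ 2) * (Dg + P) ^ 2) := Real.sqrt_le_sqrt hKey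
      _ = Real.sqrt (1 - α ^ 2) * Real.sqrt ((Dg + P) ^ 2) := Real.sqrt_mul' _ (sq_nonneg _)
      _ = Real.sqrt (1 - α ^ 2) * (Dg + P) := by rw [Real.sqrt_sq hDnn]
  rw [hQL, hQD]
  constructor
  · nlinarith [hSpD, hAle]
  · nlinarith [hSpD, hAge]

end
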